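/- Let z ∈ ℝⁿ and w > 0 with ‖z‖_∞ ≤ w ≤ ‖z‖₁. Define λ̃₁ = inf{λ ≥ 0 : ‖S(z,λ)‖₁ + λ ≤ w}, λ̃₂ = sup{λ ≥ 0 : ‖S(z,λ)‖₁ + λ ≤ w}, and λ̃₃ = sup{λ ≥ 0 : ‖S(z,2λ)‖₁ ≥ w}. Then λ̃₃ ≤ λ̃₁ ≤ λ̃₂. -/

import Mathlib

noncomputable def softTh (x t : ℝ) : ℝ := Real.sign x * max (|x| - t) 0

lemma abs_softTh (x : ℝ) {t : ℝ} (ht : 0 ≤ t) : |softTh x t| = max (|x| - t) 0 := by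
  unfold softTh
  rcases eq_or_ne x 0 with h | h
  · simp [h, Real.sign_zero, max_eq_right, neg_nonpos.mpr ht]
  · rw [abs_mul, abs_of_nonneg (le_max_right (|x| - t) 0)]
    rcases lt_or_gt_of_ne h with hx | hx
    · rw [Real.sign_of_neg hx]; simp
    · rw [Real.sign_of_pos hx]; simp

theorem stmt_9 (n : ℕ) (z : Fin n → ℝ) (w : ℝ) (hw : 0 < w)
    (h1 : (⨆ k, |z k|) ≤ w) (h2 : w ≤ ∑ k, |z k|) :
    sSup {lam : ℝ | 0 ≤ lam ∧ w ≤ ∑ k, |softTh (z k) (2 * lam)|}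
      ≤ sInf {lam : ℝ | 0 ≤ lam ∧ (∑ k, |softTh (z k) lam|) + lam ≤ w} ∧
    sInf {lam : ℝ | 0 ≤ lam ∧ (∑ k, |softTh (z k) lam|) + lam ≤ w}
      ≤ sSup {lam : ℝ | 0 ≤ lam ∧ (∑ k, |softTh (z k) lam|) + lam ≤ w} := by
  have habs0 : ∀ k, |softTh (z k) 0| = |z k| := by
    intro k
    rw [abs_softTh _ le_rfl, sub_zero, max_eq_left (abs_nonneg _)]
  have hwA : w ∈ {lam : ℝ | 0 ≤ lam ∧ (∑ k, |softTh (z k) lam|) + lam ≤ w} := by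
    refine ⟨hw.le, ?_⟩
    have hz : ∀ k, |softTh (z k) w| = 0 := by
      intro k
      rw [abs_softTh _ hw.le]
      have hk : |z k| ≤ w :=
        le_trans (le_ciSup (f := fun k => |z k|) (Set.Finite.bddAbove (Set.finite_range _)) k) h1
      simp [max_eq_right, sub_nonpos.mpr hk]
    simp [hz]
  have hbddA : ∀ a ∈ {lam : ℝ | 0 ≤ lam ∧ (∑ k, |softTh (z k) lam|) + lam ≤ w},
      a ≤ w := by
    rintro a ⟨ha0, haA⟩
    have : (0:ℝ) ≤ ∑ k, |softTh (z k) a| :=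
      Finset.sum_nonneg fun k _ => abs_nonneg _
    linarith
  have h0B : (0:ℝ) ∈ {lam : ℝ | 0 ≤ lam ∧ w ≤ ∑ k, |softTh (z k) (2 * lam)|} := by
    refine ⟨le_rfl, ?_⟩
    simpa [habs0] using h2
  have key : ∀ b ∈ {lam : ℝ | 0 ≤ lam ∧ w ≤ ∑ k, |softTh (z k) (2 * lam)|},
      ∀ a ∈ {lam : ℝ | 0 ≤ lam ∧ (∑ k, |softTh (z k) lam|) + lam ≤ w}, b ≤ a := by
    rintro b ⟨hb0, hbB⟩ a ⟨ha0, haA⟩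
    by_contra hcon
    push_neg at hcon
    have h2b : (0:ℝ) ≤ 2 * b := by linarith
    have hmono : ∀ k, |softTh (z k) (2 * b)| ≤ |softTh (z k) a| := by
      intro k
      rw [abs_softTh _ h2b, abs_softTh _ ha0]
      exact max_le_max (by linarith) le_rfl
    have hsum : (∑ k, |softTh (z k) (2 * b)|) ≤ ∑ k, |softTh (z k) a| :=
      Finset.sum_le_sum fun k _ => hmono k
    have ha0' : a = 0 := le_antisymm (by linarith) ha0
    subst ha0'
    have hb0' : 0 < b := hcon
    have hsz : (∑ k, |z k|) ≤ w := by
      simpa [habs0] using haA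
    have hex : ∃ k : Fin n, z k ≠ 0 := by
      by_contra hall
      push_neg at hall
      have : (∑ k, |z k|) = 0 := by simp [hall]
      linarith
    obtain ⟨k0, hk0⟩ := hex
    have hlt : (∑ k, |softTh (z k) (2 * b)|) < ∑ k, |z k| := by
      refine Finset.sum_lt_sum (fun k _ => ?_) ⟨k0, Finset.mem_univ _, ?_⟩
      · rw [abs_softTh _ h2b]
        exact max_le (by linarith [abs_nonneg (z k)]) (abs_nonneg _)
      · rw [abs_softTh _ h2b]
        have : 0 < |z k0| := abs_pos.mpr hk0
        exact max_lt (by linarith) this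
    linarith
  constructor
  · refine csSup_le ⟨0, h0B⟩ ?_
    intro b hb
    exact le_csInf ⟨w, hwA⟩ fun a ha => key b hb a ha
  · exact csInf_le_csSup ⟨w, hwA⟩ ⟨0, fun a ha => ha.1⟩ ⟨w, hbddA⟩
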